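/- Let a(z) = ∑_{j=−n₋}^{n₊} a_j z^j be a Laurent polynomial with complex coefficients. The Toeplitz operator T(a) is invertible as a bounded operator on ℓ² if and only if there exist polynomials u(z) = ∑_{i=0}^{n₊} u_i z^i and l(z) = ∑_{i=0}^{n₋} l_i z^i, both nonvanishing on the closed unit disk {z ∈ ℂ : |z| ≤ 1}, such that a(z) = u(z) · l(1/z), i.e., a_k = ∑_i u_i l_{i−k} for all k. -/

import Mathlib

/-- The bounded operator `T` on `ℓ²` is the Toeplitz operator with symbol coefficients
`a : ℤ → ℂ`, i.e. `(T x)_i = ∑_{j} a_{j-i} x_j` (indices in `ℕ`). -/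
def IsToeplitzOp (T : lp (fun _ : ℕ => ℂ) 2 →L[ℂ] lp (fun _ : ℕ => ℂ) 2)
    (a : ℤ → ℂ) : Prop :=
  ∀ (x : lp (fun _ : ℕ => ℂ) 2) (i : ℕ), (T x) i = ∑' j : ℕ, a ((j : ℤ) - (i : ℤ)) * x j


open scoped ENNReal

noncomputable section

local notation "H" => lp (fun _ : ℕ => ℂ) 2

lemma two_toReal' : ((2:ℝ≥0∞)).toReal = 2 := by norm_num

lemma summable_sq (x : H) : Summable (fun i => ‖x i‖ ^ (2:ℝ)) := by
  have := lp.hasSum_norm (by norm_num : 0 < ((2:ℝ≥0∞)).toReal) x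
  rw [two_toReal'] at this
  exact this.summable

lemma memL (x : H) : Memℓp (fun i : ℕ => x (i+1)) 2 := by
  apply memℓp_gen
  rw [two_toReal']
  exact (summable_nat_add_iff 1).2 (summable_sq x)

lemma memR (x : H) : Memℓp (fun i : ℕ => if i = 0 then 0 else x (i-1)) 2 := by
  apply memℓp_gen
  rw [two_toReal']
  apply (summable_nat_add_iff 1).1
  simpa using summable_sq x


lemma lp_add_apply (f g : H) (i : ℕ) : (f + g : H) i = f i + g i :=
  congrFun (lp.coeFn_add f g) i

lemma lp_smul_apply (c : ℂ) (f : H) (i : ℕ) : (c • f : H) i = c • f i :=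
  congrFun (lp.coeFn_smul c f) i

def Llin : H →ₗ[ℂ] H where
  toFun x := ⟨fun i => x (i+1), memL x⟩
  map_add' x y := by ext i; exact congrFun (lp.coeFn_add x y) (i+1)
  map_smul' c x := by ext i; exact congrFun (lp.coeFn_smul c x) (i+1)

def Rlin : H →ₗ[ℂ] H where
  toFun x := ⟨fun i => if i = 0 then 0 else x (i-1), memR x⟩
  map_add' x y := by
    ext i
    rw [lp_add_apply]
    show (if i = 0 then 0 else (x + y : H) (i-1)) =
      (if i = 0 then 0 else x (i-1)) + (if i = 0 then 0 else y (i-1))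
    by_cases h : i = 0 <;> simp [h, lp_add_apply]
  map_smul' c x := by
    ext i
    rw [lp_smul_apply]
    show (if i = 0 then 0 else (c • x : H) (i-1)) =
      c • (if i = 0 then 0 else x (i-1))
    by_cases h : i = 0 <;> simp [h, lp_smul_apply]

lemma norm_sq_eq (x : H) : ‖x‖ ^ (2:ℝ) = ∑' i, ‖x i‖ ^ (2:ℝ) := by
  have := lp.norm_rpow_eq_tsum (by norm_num : 0 < ((2:ℝ≥0∞)).toReal) x
  rwa [two_toReal'] at this

lemma norm_le_of_sq_le {x y : H} (h : ∑' i, ‖x i‖ ^ (2:ℝ) ≤ ∑' i, ‖y i‖ ^ (2:ℝ)) :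
    ‖x‖ ≤ ‖y‖ := by
  have h2 : ‖x‖ ^ (2:ℝ) ≤ ‖y‖ ^ (2:ℝ) := by rw [norm_sq_eq, norm_sq_eq]; exact h
  have : ‖x‖ ^ (2:ℕ) ≤ ‖y‖ ^ (2:ℕ) := by
    simpa [Real.rpow_natCast] using h2
  exact le_of_pow_le_pow_left₀ two_ne_zero (norm_nonneg _) this

lemma Llin_norm (x : H) : ‖Llin x‖ ≤ 1 * ‖x‖ := by
  rw [one_mul]
  apply norm_le_of_sq_le
  have : ∀ i : ℕ, ‖(Llin x) i‖ ^ (2:ℝ) = ‖x (i+1)‖ ^ (2:ℝ) := fun i => rfl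
  simp_rw [this]
  exact Summable.tsum_le_tsum_of_inj (fun i => i + 1) (add_left_injective 1)
    (fun i _ => Real.rpow_nonneg (norm_nonneg _) _) (fun i => le_rfl)
    ((summable_nat_add_iff 1).2 (summable_sq x)) (summable_sq x)

lemma Rlin_norm (x : H) : ‖Rlin x‖ ≤ 1 * ‖x‖ := by
  rw [one_mul]
  apply norm_le_of_sq_le
  have hs : Summable (fun i : ℕ => ‖(Rlin x) i‖ ^ (2:ℝ)) := by
    apply (summable_nat_add_iff 1).1
    have : ∀ i : ℕ, ‖(Rlin x) (i+1)‖ ^ (2:ℝ) = ‖x i‖ ^ (2:ℝ) := fun i => rfl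
    simp_rw [this]; exact summable_sq x
  rw [Summable.tsum_eq_zero_add hs]
  have h0 : ‖(Rlin x) 0‖ ^ (2:ℝ) = 0 := by
    show ‖(0:ℂ)‖ ^ (2:ℝ) = 0
    simp
  rw [h0, zero_add]
  exact le_of_eq rfl

def Lop : H →L[ℂ] H := Llin.mkContinuous 1 Llin_norm
def Rop : H →L[ℂ] H := Rlin.mkContinuous 1 Rlin_norm

lemma Lop_apply (x : H) (k : ℕ) : (Lop x) k = x (k+1) := rfl
lemma Rop_apply (x : H) (k : ℕ) : (Rop x) k = if k = 0 then 0 else x (k-1) := rfl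

lemma Lop_norm : ‖Lop‖ ≤ 1 := LinearMap.mkContinuous_norm_le _ zero_le_one _
lemma Rop_norm : ‖Rop‖ ≤ 1 := LinearMap.mkContinuous_norm_le _ zero_le_one _

lemma Lop_pow_apply (i : ℕ) (x : H) (k : ℕ) : ((Lop ^ i) x) k = x (k + i) := by
  induction i generalizing x k with
  | zero => rfl
  | succ n ih =>
    rw [pow_succ]
    show ((Lop ^ n) (Lop x)) k = _
    rw [ih, Lop_apply]
    exact congrArg (⇑x) (by omega)

lemma Rop_pow_apply (j : ℕ) (x : H) (k : ℕ) :
    ((Rop ^ j) x) k = if j ≤ k then x (k - j) else 0 := by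
  induction j generalizing x k with
  | zero => simp
  | succ n ih =>
    rw [pow_succ]
    show ((Rop ^ n) (Rop x)) k = _
    rw [ih]
    by_cases h : n ≤ k
    · rw [if_pos h, Rop_apply]
      by_cases h2 : n + 1 ≤ k
      · rw [if_neg (by omega : ¬ k - n = 0), if_pos h2]
        exact congrArg (⇑x) (by omega)
      · rw [if_pos (by omega : k - n = 0), if_neg h2]
    · rw [if_neg h, if_neg (by omega : ¬ n + 1 ≤ k)]

-- chunk2 (appended to c1 for testing)
open Finset in
lemma lp_sum_apply {ι : Type*} (s : Finset ι) (f : ι → H) (k : ℕ) :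
    (∑ i ∈ s, f i : H) k = ∑ i ∈ s, (f i) k := by
  rw [lp.coeFn_sum, Finset.sum_apply]

def IsToeplitzOp' (T : H →L[ℂ] H) (a : ℤ → ℂ) : Prop :=
  ∀ (x : H) (i : ℕ), (T x) i = ∑' j : ℕ, a ((j : ℤ) - (i : ℤ)) * x j

open Finset in
lemma toeplitz_factor (a : ℤ → ℂ) (I J : ℕ) (u l : ℕ → ℂ)
    (h : ∀ k : ℤ, a k = ∑ i ∈ range I, ∑ j ∈ range J,
       if (i:ℤ) - (j:ℤ) = k then u i * l j else 0)
    (Ta : H →L[ℂ] H) (hTa : IsToeplitzOp' Ta a) :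
    Ta = (∑ i ∈ range I, u i • Lop ^ i) * (∑ j ∈ range J, l j • Rop ^ j) := by
  ext x k
  have hRHS : (((∑ i ∈ range I, u i • Lop ^ i) * (∑ j ∈ range J, l j • Rop ^ j)) x) k
      = ∑ i ∈ range I, ∑ j ∈ range J,
          u i * l j * (if j ≤ k + i then x (k + i - j) else 0) := by
    rw [ContinuousLinearMap.mul_apply, ContinuousLinearMap.sum_apply, lp_sum_apply]
    refine Finset.sum_congr rfl fun i _ => ?_
    rw [ContinuousLinearMap.smul_apply, lp_smul_apply, Lop_pow_apply,
      ContinuousLinearMap.sum_apply, lp_sum_apply, smul_eq_mul, Finset.mul_sum]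
    refine Finset.sum_congr rfl fun j _ => ?_
    rw [ContinuousLinearMap.smul_apply, lp_smul_apply, Rop_pow_apply]
    simp only [smul_eq_mul]
    ring
  rw [hRHS, hTa]
  have hvanish : ∀ j' ∉ range (k + I), a ((j' : ℤ) - k) * x j' = 0 := by
    intro j' hj'
    simp only [mem_range, not_lt] at hj'
    have : a ((j' : ℤ) - k) = 0 := by
      rw [h]
      apply Finset.sum_eq_zero
      intro i hi
      apply Finset.sum_eq_zero
      intro j hj
      rw [if_neg]
      simp only [mem_range] at hi hj
      omega
    rw [this, zero_mul]
  rw [tsum_eq_sum hvanish]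
  have expand : ∀ j' ∈ range (k + I), a ((j' : ℤ) - k) * x j'
      = ∑ i ∈ range I, ∑ j ∈ range J,
          (if (i:ℤ) - (j:ℤ) = (j':ℤ) - k then u i * l j else 0) * x j' := by
    intro j' _
    rw [h ((j' : ℤ) - k), Finset.sum_mul]
    refine Finset.sum_congr rfl fun i _ => ?_
    rw [Finset.sum_mul]
  rw [Finset.sum_congr rfl expand]
  rw [Finset.sum_comm]
  refine Finset.sum_congr rfl fun i hi => ?_
  rw [Finset.sum_comm]
  refine Finset.sum_congr rfl fun j hj => ?_
  simp only [mem_range] at hi hj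
  by_cases hcase : j ≤ k + i
  · rw [if_pos hcase]
    rw [Finset.sum_eq_single_of_mem (k + i - j) (by simp [mem_range]; omega)]
    · rw [if_pos (by push_cast; omega)]
    · intro b _ hb
      rw [if_neg (by push_cast; omega), zero_mul]
  · rw [if_neg hcase, mul_zero]
    apply Finset.sum_eq_zero
    intro b _
    rw [if_neg (by push_cast; omega), zero_mul]

-- chunk 3
instance : Nontrivial H := by
  refine ⟨lp.single 2 0 1, 0, fun hcontra => ?_⟩
  have h1 : (lp.single 2 0 (1:ℂ) : H) 0 = 1 := lp.single_apply_self _ _ _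
  rw [hcontra] at h1
  rw [show ((0:H) : ∀ _ : ℕ, ℂ) 0 = 0 from congrFun (lp.coeFn_zero (fun _ : ℕ => ℂ) 2) 0] at h1
  exact zero_ne_one h1

open Polynomial in
lemma isUnit_linear_factor (T : H →L[ℂ] H) (hT : ‖T‖ ≤ 1) (μ : ℂ) (hμ : 1 < ‖μ‖) :
    IsUnit (aeval T (X - C μ)) := by
  have hspec : μ ∉ spectrum ℂ T := by
    intro hmem
    have := spectrum.subset_closedBall_norm T hmem
    rw [Metric.mem_closedBall, dist_zero_right] at this
    exact absurd (this.trans hT) (not_le.2 hμ)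
  rw [spectrum.notMem_iff] at hspec
  have : aeval T (X - C μ) = -(algebraMap ℂ (H →L[ℂ] H) μ - T) := by
    rw [map_sub, aeval_X, aeval_C, neg_sub]
  rw [this]
  exact hspec.neg

open Polynomial in
lemma isUnit_aeval_of_no_root_in_disk (T : H →L[ℂ] H) (hT : ‖T‖ ≤ 1)
    (U : ℂ[X]) (hU : ∀ z : ℂ, ‖z‖ ≤ 1 → U.eval z ≠ 0) :
    IsUnit (aeval T U) := by
  have key : ∀ n (U : ℂ[X]), U.natDegree ≤ n → (∀ z : ℂ, ‖z‖ ≤ 1 → U.eval z ≠ 0) →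
      IsUnit (aeval T U) := by
    intro n
    induction n with
    | zero =>
      intro U hdeg hU
      rw [Polynomial.eq_C_of_natDegree_le_zero hdeg, aeval_C]
      apply (isUnit_iff_ne_zero.2 ?_).map (algebraMap ℂ (H →L[ℂ] H))
      have := hU 0 (by simp)
      rwa [Polynomial.eq_C_of_natDegree_le_zero hdeg, eval_C] at this
    | succ n ih =>
      intro U hdeg hU
      by_cases h0 : U.natDegree = 0
      · rw [Polynomial.eq_C_of_natDegree_le_zero (le_of_eq h0), aeval_C]
        apply (isUnit_iff_ne_zero.2 ?_).map (algebraMap ℂ (H →L[ℂ] H))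
        have := hU 0 (by simp)
        rwa [Polynomial.eq_C_of_natDegree_le_zero (le_of_eq h0), eval_C] at this
      · have hdpos : 0 < U.degree := natDegree_pos_iff_degree_pos.1 (Nat.pos_of_ne_zero h0)
        obtain ⟨μ, hμroot⟩ := Complex.exists_root hdpos
        obtain ⟨V, hV⟩ := dvd_iff_isRoot.2 hμroot
        have hU0 : U ≠ 0 := fun h => hU 0 (by simp) (by simp [h])
        have hV0 : V ≠ 0 := fun h => hU0 (by rw [hV, h, mul_zero])
        have hμ : 1 < ‖μ‖ := by
          by_contra hle
          exact hU μ (le_of_not_gt hle) hμroot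
        have hVdisk : ∀ z : ℂ, ‖z‖ ≤ 1 → V.eval z ≠ 0 := by
          intro z hz hve
          exact hU z hz (by rw [hV, eval_mul, hve, mul_zero])
        have hVdeg : V.natDegree ≤ n := by
          have := Polynomial.natDegree_mul (by
            intro h
            rw [h, zero_mul] at hV
            exact hU0 hV) hV0 (p := X - C μ)
          rw [← hV, Polynomial.natDegree_X_sub_C] at this
          omega
        rw [hV, map_mul]
        exact (isUnit_linear_factor T hT μ hμ).mul (ih V hVdeg hVdisk)
  exact key U.natDegree U le_rfl hU

lemma isUnit_injective' {T : H →L[ℂ] H} (h : IsUnit T) : Function.Injective T := by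
  obtain ⟨v, rfl⟩ := h
  intro x y hxy
  have hz : ∀ z : H, (↑v⁻¹ : H →L[ℂ] H) ((v : H →L[ℂ] H) z) = z := by
    intro z
    rw [← ContinuousLinearMap.mul_apply, v.inv_mul, ContinuousLinearMap.one_apply]
  rw [← hz x, ← hz y, hxy]

lemma isUnit_surjective' {T : H →L[ℂ] H} (h : IsUnit T) : Function.Surjective T := by
  obtain ⟨v, rfl⟩ := h
  intro y
  exact ⟨(↑v⁻¹ : H →L[ℂ] H) y, by
    rw [← ContinuousLinearMap.mul_apply, v.mul_inv, ContinuousLinearMap.one_apply]⟩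

-- chunk 4 : polynomial machinery
open Polynomial in
lemma natDeg_prodXsubC (s : Multiset ℂ) :
    ((s.map (fun ρ => X - C ρ)).prod).natDegree = Multiset.card s :=
  natDegree_multiset_prod_X_sub_C_eq_card s

open Polynomial in
lemma reverse_coeff (s : Multiset ℂ) : ∀ j : ℕ,
    ((s.map (fun ρ => 1 - C ρ * X)).prod).coeff j =
      (if j ≤ Multiset.card s then
        ((s.map (fun ρ => X - C ρ)).prod).coeff (Multiset.card s - j) else 0) := by
  induction s using Multiset.induction_on with
  | empty =>
    intro j
    cases j with
    | zero => simp
    | succ t => simp [coeff_one]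
  | cons ρ s ih =>
    intro j
    set n := Multiset.card s with hn
    have hcard : Multiset.card (ρ ::ₘ s) = n + 1 := by simp [hn]
    set A := (s.map (fun ρ => X - C ρ)).prod with hA
    set B := (s.map (fun ρ => 1 - C ρ * X)).prod with hB
    have hAdeg : A.natDegree = n := natDeg_prodXsubC s
    have hL : ((ρ ::ₘ s).map (fun ρ => (1:ℂ[X]) - C ρ * X)).prod = (1 - C ρ * X) * B := by
      rw [Multiset.map_cons, Multiset.prod_cons]
    have hR : ((ρ ::ₘ s).map (fun ρ => X - C ρ)).prod = (X - C ρ) * A := by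
      rw [Multiset.map_cons, Multiset.prod_cons]
    rw [hL, hR, hcard]
    have hLc : ∀ t : ℕ, ((1 - C ρ * X) * B).coeff t
        = B.coeff t - ρ * ((X * B).coeff t) := by
      intro t
      rw [sub_mul, one_mul, coeff_sub, mul_assoc, coeff_C_mul]
    have hRc : ∀ t : ℕ, ((X - C ρ) * A).coeff t
        = (X * A).coeff t - ρ * A.coeff t := by
      intro t
      rw [sub_mul, coeff_sub, coeff_C_mul]
    rw [hLc]
    cases j with
    | zero =>
      rw [if_pos (by omega), coeff_X_mul_zero, hRc, Nat.sub_zero, coeff_X_mul,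
        mul_zero, sub_zero]
      have h0 := ih 0
      rw [if_pos (by omega), Nat.sub_zero] at h0
      have hA1 : A.coeff (n + 1) = 0 :=
        coeff_eq_zero_of_natDegree_lt (by omega)
      rw [hA1, mul_zero, sub_zero, h0]
    | succ t =>
      rw [coeff_X_mul, ih t, ih (t+1)]
      by_cases h1 : t + 1 ≤ n + 1
      · rw [if_pos h1, hRc]
        by_cases h2 : t + 1 ≤ n
        · rw [if_pos h2, if_pos (by omega : t ≤ n)]
          rw [show n + 1 - (t + 1) = (n - (t+1)) + 1 by omega, coeff_X_mul,
            show n - (t+1) + 1 = n - t by omega]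
        · rw [if_neg h2, if_pos (by omega)]
          have ht : t = n := by omega
          subst ht
          rw [show n + 1 - (n + 1) = 0 from by omega, coeff_X_mul_zero, Nat.sub_self]
      · rw [if_neg h1, if_neg (by omega), if_neg (by omega), mul_zero, sub_zero]

open Polynomial in
lemma natDeg_revprod_le (s : Multiset ℂ) :
    ((s.map (fun ρ => (1:ℂ[X]) - C ρ * X)).prod).natDegree ≤ Multiset.card s := by
  rw [natDegree_le_iff_coeff_eq_zero]
  intro m hm
  rw [reverse_coeff, if_neg (by omega)]

open Polynomial in
lemma eval_revprod (s : Multiset ℂ) (z : ℂ) :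
    eval z ((s.map (fun ρ => (1:ℂ[X]) - C ρ * X)).prod) = (s.map (fun ρ => 1 - ρ * z)).prod := by
  rw [eval_multiset_prod, Multiset.map_map]
  congr 1
  apply Multiset.map_congr rfl
  intro ρ _
  simp

open Polynomial in
lemma eval_prodXsubC (s : Multiset ℂ) (z : ℂ) :
    eval z ((s.map (fun ρ => X - C ρ)).prod) = (s.map (fun ρ => z - ρ)).prod := by
  rw [eval_multiset_prod, Multiset.map_map]
  congr 1
  apply Multiset.map_congr rfl
  intro ρ _
  simp

open Polynomial in
lemma revprod_nonvanishing (s : Multiset ℂ) (hs : ∀ ρ ∈ s, ‖ρ‖ < 1)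
    (z : ℂ) (hz : ‖z‖ ≤ 1) :
    eval z ((s.map (fun ρ => (1:ℂ[X]) - C ρ * X)).prod) ≠ 0 := by
  rw [eval_revprod]
  apply Multiset.prod_ne_zero
  intro h0
  rw [Multiset.mem_map] at h0
  obtain ⟨ρ, hρ, hρ0⟩ := h0
  have h1 : ρ * z = 1 := by linear_combination -hρ0
  have : ‖ρ * z‖ < 1 := by
    rw [norm_mul]
    calc ‖ρ‖ * ‖z‖ ≤ ‖ρ‖ * 1 := by
          apply mul_le_mul_of_nonneg_left hz (norm_nonneg _)
      _ = ‖ρ‖ := mul_one _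
      _ < 1 := hs ρ hρ
  rw [h1] at this
  simp at this

open Polynomial in
lemma prodXsubC_nonvanishing (s : Multiset ℂ) (hs : ∀ ρ ∈ s, 1 < ‖ρ‖)
    (z : ℂ) (hz : ‖z‖ ≤ 1) :
    eval z ((s.map (fun ρ => X - C ρ)).prod) ≠ 0 := by
  rw [eval_prodXsubC]
  apply Multiset.prod_ne_zero
  intro h0
  rw [Multiset.mem_map] at h0
  obtain ⟨ρ, hρ, hρ0⟩ := h0
  have : z = ρ := by linear_combination hρ0
  subst this
  exact absurd hz (not_le.2 (hs z hρ))

-- chunk 5 : circle nonvanishing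
open Finset in
lemma circle_nonvanishing (nm np : ℕ) (a : ℤ → ℂ)
    (hsupp : ∀ k : ℤ, (k < -(nm : ℤ) ∨ (np : ℤ) < k) → a k = 0)
    (Ta : H →L[ℂ] H) (hTa : IsToeplitzOp' Ta a) (hunit : IsUnit Ta)
    (z : ℂ) (hz : ‖z‖ = 1) :
    ∑ t ∈ range (nm + np + 1), a ((t:ℤ) - nm) * z ^ t ≠ 0 := by
  intro hS
  obtain ⟨v, hv⟩ := hunit
  have hlow : ∀ x : H, ‖x‖ ≤ ‖(↑v⁻¹ : H →L[ℂ] H)‖ * ‖Ta x‖ := by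
    intro x
    have hx : (↑v⁻¹ : H →L[ℂ] H) (Ta x) = x := by
      rw [← hv, ← ContinuousLinearMap.mul_apply, v.inv_mul,
        ContinuousLinearMap.one_apply]
    calc ‖x‖ = ‖(↑v⁻¹ : H →L[ℂ] H) (Ta x)‖ := by rw [hx]
      _ ≤ ‖(↑v⁻¹ : H →L[ℂ] H)‖ * ‖Ta x‖ := (↑v⁻¹ : H →L[ℂ] H).le_opNorm _
  set A := ∑ t ∈ range (nm + np + 1), ‖a ((t:ℤ) - nm)‖ with hAdef
  have hA0 : 0 ≤ A := sum_nonneg fun _ _ => norm_nonneg _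
  set D : ℝ := ‖(↑v⁻¹ : H →L[ℂ] H)‖ ^ (2:ℝ) * ((nm + nm + np : ℕ) * A ^ (2:ℝ)) with hD
  set N := np + 1 + Nat.ceil D with hNdef
  have hNnp : np < N := by omega
  set x : H := ∑ j ∈ range N, lp.single 2 j (z ^ j) with hxdef
  have hxapp : ∀ j : ℕ, x j = if j < N then z ^ j else 0 := by
    intro j
    rw [hxdef, lp_sum_apply]
    by_cases hj : j < N
    · rw [if_pos hj]
      rw [Finset.sum_eq_single_of_mem j (mem_range.2 hj)]
      · exact lp.single_apply_self _ _ _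
      · intro b _ hb
        exact lp.single_apply_ne _ _ _ hb.symm
    · rw [if_neg hj]
      apply Finset.sum_eq_zero
      intro b hb
      exact lp.single_apply_ne _ _ _ (by simp only [mem_range] at hb; omega)
  have hxnormsq : ‖x‖ ^ (2:ℝ) = N := by
    rw [hxdef]
    have := lp.norm_sum_single (by norm_num : 0 < ((2:ℝ≥0∞)).toReal)
      (fun j : ℕ => z ^ j) (range N)
    rw [two_toReal'] at this
    rw [this]
    have : ∀ j ∈ range N, ‖z ^ j‖ ^ (2:ℝ) = 1 := by
      intro j _
      rw [norm_pow, hz, one_pow, Real.one_rpow]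
    rw [Finset.sum_congr rfl this, Finset.sum_const, card_range, nsmul_eq_mul, mul_one]
  have hxle : ∀ j : ℕ, ‖x j‖ ≤ 1 := by
    intro j
    rw [hxapp]
    by_cases hj : j < N
    · rw [if_pos hj, norm_pow, hz, one_pow]
    · rw [if_neg hj, norm_zero]; norm_num
  have hTx : ∀ k : ℕ, (Ta x) k = ∑ j ∈ range N, a ((j:ℤ) - k) * x j := by
    intro k
    rw [hTa]
    apply tsum_eq_sum
    intro j hj
    rw [hxapp, if_neg (by simp only [mem_range] at hj; omega), mul_zero]
  have hentry : ∀ k : ℕ, ‖(Ta x) k‖ ≤ A := by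
    intro k
    rw [hTx]
    calc ‖∑ j ∈ range N, a ((j:ℤ) - k) * x j‖
        ≤ ∑ j ∈ range N, ‖a ((j:ℤ) - k) * x j‖ := norm_sum_le _ _
      _ ≤ ∑ j ∈ range N, ‖a ((j:ℤ) - k)‖ := by
          apply Finset.sum_le_sum
          intro j _
          rw [norm_mul]
          exact mul_le_of_le_one_right (norm_nonneg _) (hxle j)
      _ ≤ A := by
          set s' := (range N).filter (fun j : ℕ => a ((j:ℤ) - k) ≠ 0) with hs'
          rw [show (∑ j ∈ range N, ‖a ((j:ℤ) - k)‖)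
              = ∑ j ∈ s', ‖a ((j:ℤ) - k)‖ by
            rw [hs', Finset.sum_filter_of_ne]
            intro j _ hne h0
            exact hne (by rw [h0, norm_zero])]
          have hmem : ∀ j ∈ s', k ≤ j + nm ∧ (j:ℤ) - k ≤ np := by
            intro j hj
            rw [hs', mem_filter] at hj
            constructor
            · by_contra hc
              exact hj.2 (hsupp _ (Or.inl (by push_cast; omega)))
            · by_contra hc
              exact hj.2 (hsupp _ (Or.inr (by push_cast; omega)))
          have hinj : ∀ p ∈ s', ∀ q ∈ s', p + nm - k = q + nm - k → p = q := by
            intro p hp q hq hpq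
            have hp' := hmem p hp
            have hq' := hmem q hq
            omega
          have heq : ∑ j ∈ s', ‖a ((j:ℤ) - k)‖
              = ∑ t ∈ s'.image (fun j => j + nm - k), ‖a ((t:ℤ) - nm)‖ := by
            rw [Finset.sum_image hinj]
            apply Finset.sum_congr rfl
            intro j hj
            have := hmem j hj
            congr 2
            push_cast [Nat.cast_sub (by omega : k ≤ j + nm)]
            omega
          rw [heq, hAdef]
          apply Finset.sum_le_sum_of_subset_of_nonneg
          · intro t ht
            rw [Finset.mem_image] at ht
            obtain ⟨j, hj, rfl⟩ := ht
            have := hmem j hj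
            rw [mem_range]
            omega
          · intro _ _ _; exact norm_nonneg _
  have hgood : ∀ k : ℕ, nm ≤ k → k + np < N → (Ta x) k = 0 := by
    intro k hk1 hk2
    rw [hTx]
    have hstep1 : ∀ j ∈ range N, a ((j:ℤ) - k) * x j = a ((j:ℤ) - k) * z ^ j := by
      intro j hj
      rw [hxapp, if_pos (mem_range.1 hj)]
    rw [Finset.sum_congr rfl hstep1]
    have himsub : (range (nm + np + 1)).image (fun t => k + t - nm) ⊆ range N := by
      intro j hj
      rw [Finset.mem_image] at hj
      obtain ⟨t, ht, rfl⟩ := hj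
      rw [mem_range] at ht ⊢
      omega
    rw [← Finset.sum_subset himsub ?vanish]
    case vanish =>
      intro j hj hjim
      by_cases hwin : (j:ℤ) - k < -(nm:ℤ) ∨ (np:ℤ) < (j:ℤ) - k
      · rw [hsupp _ hwin, zero_mul]
      · exfalso
        apply hjim
        rw [Finset.mem_image]
        refine ⟨j + nm - k, ?_, by omega⟩
        rw [mem_range]
        push_cast at hwin
        omega
    rw [Finset.sum_image (by intro p hp q hq h; simp only at h; omega)]
    have hterm : ∀ t ∈ range (nm + np + 1),
        a (((k + t - nm : ℕ):ℤ) - k) * z ^ (k + t - nm)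
        = (a ((t:ℤ) - nm) * z ^ t) * z ^ (k - nm) := by
      intro t ht
      have h1 : (((k + t - nm : ℕ)):ℤ) - k = (t:ℤ) - nm := by
        push_cast [Nat.cast_sub (by omega : nm ≤ k + t)]
        omega
      have h2 : k + t - nm = t + (k - nm) := by omega
      rw [h1, h2, pow_add]
      ring
    rw [Finset.sum_congr rfl hterm, ← Finset.sum_mul, hS, zero_mul]
  have hfar : ∀ k : ℕ, N + nm ≤ k → (Ta x) k = 0 := by
    intro k hk
    rw [hTx]
    apply Finset.sum_eq_zero
    intro j hj
    rw [mem_range] at hj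
    rw [hsupp _ (Or.inl (by push_cast; omega)), zero_mul]
  set F := range nm ∪ Ico (N - np) (N + nm) with hF
  have hTxnormsq : ‖Ta x‖ ^ (2:ℝ) = ∑ k ∈ F, ‖(Ta x) k‖ ^ (2:ℝ) := by
    rw [norm_sq_eq]
    apply tsum_eq_sum
    intro k hk
    rw [hF, Finset.mem_union, mem_range, Finset.mem_Ico, not_or] at hk
    push_neg at hk
    have : (Ta x) k = 0 := by
      by_cases h1 : k < N - np
      · exact hgood k (by omega) (by omega) 
      · exact hfar k (by omega)
    rw [this, norm_zero, Real.zero_rpow (by norm_num : (2:ℝ) ≠ 0)]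
  have hcardF : (F.card : ℝ) ≤ ((nm + nm + np : ℕ) : ℝ) := by
    have h1 : F.card ≤ (range nm).card + (Ico (N - np) (N + nm)).card :=
      card_union_le _ _
    rw [card_range, Nat.card_Ico] at h1
    have h2 : F.card ≤ nm + nm + np := by omega
    exact_mod_cast h2
  have hbound : ‖Ta x‖ ^ (2:ℝ) ≤ ((nm + nm + np : ℕ) : ℝ) * A ^ (2:ℝ) := by
    rw [hTxnormsq]
    calc ∑ k ∈ F, ‖(Ta x) k‖ ^ (2:ℝ) ≤ ∑ k ∈ F, A ^ (2:ℝ) := by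
          apply Finset.sum_le_sum
          intro k _
          exact Real.rpow_le_rpow (norm_nonneg _) (hentry k) (by norm_num)
      _ = F.card * A ^ (2:ℝ) := by rw [Finset.sum_const, nsmul_eq_mul]
      _ ≤ ((nm + nm + np : ℕ) : ℝ) * A ^ (2:ℝ) :=
          mul_le_mul_of_nonneg_right hcardF (Real.rpow_nonneg hA0 _)
  have hfin : (N:ℝ) ≤ D := by
    rw [← hxnormsq, hD]
    calc ‖x‖ ^ (2:ℝ)
        ≤ (‖(↑v⁻¹ : H →L[ℂ] H)‖ * ‖Ta x‖) ^ (2:ℝ) :=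
          Real.rpow_le_rpow (norm_nonneg _) (hlow x) (by norm_num)
      _ = ‖(↑v⁻¹ : H →L[ℂ] H)‖ ^ (2:ℝ) * ‖Ta x‖ ^ (2:ℝ) :=
          Real.mul_rpow (norm_nonneg _) (norm_nonneg _)
      _ ≤ ‖(↑v⁻¹ : H →L[ℂ] H)‖ ^ (2:ℝ) * (((nm + nm + np : ℕ) : ℝ) * A ^ (2:ℝ)) :=
          mul_le_mul_of_nonneg_left hbound (Real.rpow_nonneg (norm_nonneg _) _)
  have hle1 : (N:ℝ) ≤ (Nat.ceil D : ℝ) := hfin.trans (Nat.le_ceil D)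
  have hle2 : N ≤ Nat.ceil D := by exact_mod_cast hle1
  omega

-- chunk 6a : helpers + backward direction
open Polynomial Finset in
lemma sum_smul_pow_eq_aeval (T : H →L[ℂ] H) (n : ℕ) (c : ℕ → ℂ) :
    (∑ i ∈ range n, c i • T ^ i)
      = aeval T (∑ i ∈ range n, C (c i) * X ^ i) := by
  rw [map_sum]
  apply Finset.sum_congr rfl
  intro i _
  rw [map_mul, aeval_C, map_pow, aeval_X, Algebra.smul_def]

open Polynomial Finset in
lemma eval_sum_C_mul_X_pow (n : ℕ) (c : ℕ → ℂ) (z : ℂ) :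
    (∑ i ∈ range n, C (c i) * X ^ i).eval z = ∑ i ∈ range n, c i * z ^ i := by
  rw [eval_finset_sum]
  apply Finset.sum_congr rfl
  intro i _
  rw [eval_mul, eval_C, eval_pow, eval_X]

open Polynomial Finset in
lemma backward_dir (nm np : ℕ) (a : ℤ → ℂ) (Ta : H →L[ℂ] H) (hTa : IsToeplitzOp' Ta a)
    (u l : ℕ → ℂ)
    (hu : ∀ z : ℂ, ‖z‖ ≤ 1 → ∑ i ∈ range (np + 1), u i * z ^ i ≠ 0)
    (hl : ∀ z : ℂ, ‖z‖ ≤ 1 → ∑ i ∈ range (nm + 1), l i * z ^ i ≠ 0)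
    (hk : ∀ k : ℤ, a k = ∑ i ∈ range (np + 1), ∑ j ∈ range (nm + 1),
          if (i : ℤ) - (j : ℤ) = k then u i * l j else 0) :
    IsUnit Ta := by
  rw [toeplitz_factor a (np+1) (nm+1) u l hk Ta hTa]
  apply IsUnit.mul
  · rw [sum_smul_pow_eq_aeval]
    apply isUnit_aeval_of_no_root_in_disk Lop Lop_norm
    intro z hz
    rw [eval_sum_C_mul_X_pow]
    exact hu z hz
  · rw [sum_smul_pow_eq_aeval]
    apply isUnit_aeval_of_no_root_in_disk Rop Rop_norm
    intro z hz
    rw [eval_sum_C_mul_X_pow]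
    exact hl z hz

-- chunk 7 : coefficient claim
open Polynomial Finset in
lemma coeff_claim (nm np : ℕ) (a : ℤ → ℂ)
    (hsupp : ∀ k : ℤ, (k < -(nm : ℤ) ∨ (np : ℤ) < k) → a k = 0)
    (p U A B : ℂ[X]) (m : ℕ)
    (hp_coeff : ∀ t : ℕ, p.coeff t = if t < nm + np + 1 then a ((t:ℤ) - nm) else 0)
    (hpUA : p = U * A)
    (hUdeg : U.natDegree + m ≤ nm + np)
    (hAdeg : A.natDegree = m)
    (hBcoeff : ∀ j : ℕ, B.coeff j = if j ≤ m then A.coeff (m - j) else 0) :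
    ∀ k : ℤ, a k = ∑ i ∈ range (U.natDegree + 1), ∑ j ∈ range (m + 1),
      if (i : ℤ) - (j : ℤ) = k + nm - m then U.coeff i * B.coeff j else 0 := by
  intro k
  by_cases hk1 : k + nm < 0
  · rw [hsupp k (Or.inl (by omega))]
    symm
    apply Finset.sum_eq_zero; intro i hi
    apply Finset.sum_eq_zero; intro j hj
    rw [mem_range] at hi hj
    rw [if_neg (by omega)]
  by_cases hk2 : (np:ℤ) < k
  · rw [hsupp k (Or.inr hk2)]
    symm
    apply Finset.sum_eq_zero; intro i hi
    apply Finset.sum_eq_zero; intro j hj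
    rw [mem_range] at hi hj
    rw [if_neg (by omega)]
  · have hk0 : 0 ≤ k + nm := by omega
    set t := (k + nm).toNat with htdef
    have ht : (t:ℤ) = k + nm := Int.toNat_of_nonneg hk0
    have htle : t ≤ nm + np := by omega
    have hak : a k = p.coeff t := by
      rw [hp_coeff t, if_pos (by omega)]
      congr 1
      omega
    set I := U.natDegree + 1 with hI
    have hinner : ∀ i : ℕ,
        (∑ j ∈ range (m + 1),
          if (i : ℤ) - (j : ℤ) = k + nm - m then U.coeff i * B.coeff j else 0)
        = (if t ≤ i + m ∧ i ≤ t then U.coeff i * A.coeff (t - i) else 0) := by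
      intro i
      by_cases hc : t ≤ i + m ∧ i ≤ t
      · rw [if_pos hc]
        obtain ⟨hc1, hc2⟩ := hc
        rw [Finset.sum_eq_single_of_mem (i + m - t) (mem_range.2 (by omega))]
        · rw [if_pos (by push_cast; omega), hBcoeff, if_pos (by omega)]
          congr 2
          omega
        · intro b hb hbne
          rw [mem_range] at hb
          rw [if_neg (by push_cast; omega)]
      · rw [if_neg hc]
        apply Finset.sum_eq_zero
        intro j hj
        rw [mem_range] at hj
        rcases not_and_or.1 hc with h | h
        · rw [if_neg (by push_cast; omega)]
        · rw [if_neg (by push_cast; omega)]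
    rw [Finset.sum_congr rfl (fun i _ => hinner i)]
    have hext : ∑ i ∈ range I,
          (if t ≤ i + m ∧ i ≤ t then U.coeff i * A.coeff (t - i) else 0)
        = ∑ i ∈ range (t + 1 + I),
          (if t ≤ i + m ∧ i ≤ t then U.coeff i * A.coeff (t - i) else 0) := by
      apply Finset.sum_subset (Finset.range_subset_range.2 (by omega))
      intro i _ hi
      rw [mem_range, not_lt] at hi
      have hU0 : U.coeff i = 0 := coeff_eq_zero_of_natDegree_lt (by omega)
      simp [hU0]
    rw [hext]
    have hstep : ∑ i ∈ range (t + 1), U.coeff i * A.coeff (t - i)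
        = ∑ i ∈ range (t + 1),
          (if t ≤ i + m ∧ i ≤ t then U.coeff i * A.coeff (t - i) else 0) := by
      apply Finset.sum_congr rfl
      intro i hi
      rw [mem_range] at hi
      by_cases hc2 : t ≤ i + m
      · rw [if_pos ⟨hc2, by omega⟩]
      · rw [if_neg (fun hcc => hc2 hcc.1),
          coeff_eq_zero_of_natDegree_lt (p := A) (by omega), mul_zero]
    have hstep2 : ∑ i ∈ range (t + 1),
          (if t ≤ i + m ∧ i ≤ t then U.coeff i * A.coeff (t - i) else 0)
        = ∑ i ∈ range (t + 1 + I),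
          (if t ≤ i + m ∧ i ≤ t then U.coeff i * A.coeff (t - i) else 0) := by
      apply Finset.sum_subset (Finset.range_subset_range.2 (by omega))
      intro i _ hi
      rw [mem_range, not_lt] at hi
      rw [if_neg (by omega)]
    rw [hak, hpUA, coeff_mul, Finset.Nat.sum_antidiagonal_eq_sum_range_succ_mk,
      hstep, hstep2]

-- chunk 8 : forward direction
lemma sum_range_shift {M : Type*} [AddCommMonoid M] (f : ℕ → M) (s n : ℕ)
    (h0 : ∀ i, i < s → f i = 0) :
    ∑ i ∈ Finset.range (s + n), f i = ∑ i ∈ Finset.range n, f (s + i) := by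
  rw [Finset.sum_range_add,
    Finset.sum_eq_zero (fun i hi => h0 i (Finset.mem_range.1 hi)), zero_add]

lemma e0_ne_zero : (lp.single 2 0 (1:ℂ) : H) ≠ 0 := by
  intro hcontra
  have h1 : (lp.single 2 0 (1:ℂ) : H) 0 = 1 := lp.single_apply_self _ _ _
  rw [hcontra] at h1
  rw [show ((0:H) : ∀ _ : ℕ, ℂ) 0 = 0 from congrFun (lp.coeFn_zero (fun _ : ℕ => ℂ) 2) 0] at h1
  exact zero_ne_one h1

open Polynomial Finset in
lemma forward_dir (nm np : ℕ) (a : ℤ → ℂ)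
    (hsupp : ∀ k : ℤ, (k < -(nm : ℤ) ∨ (np : ℤ) < k) → a k = 0)
    (Ta : H →L[ℂ] H) (hTa : IsToeplitzOp' Ta a) (hunit : IsUnit Ta) :
    ∃ u l : ℕ → ℂ,
      (∀ z : ℂ, ‖z‖ ≤ 1 → ∑ i ∈ Finset.range (np + 1), u i * z ^ i ≠ 0) ∧
      (∀ z : ℂ, ‖z‖ ≤ 1 → ∑ i ∈ Finset.range (nm + 1), l i * z ^ i ≠ 0) ∧
      (∀ k : ℤ, a k =
        ∑ i ∈ Finset.range (np + 1), ∑ j ∈ Finset.range (nm + 1),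
          if (i : ℤ) - (j : ℤ) = k then u i * l j else 0) := by
  have hcirc0 := circle_nonvanishing nm np a hsupp Ta hTa hunit
  set p : ℂ[X] := ∑ t ∈ range (nm+np+1), C (a ((t:ℤ) - nm)) * X ^ t with hpdef
  have hp_eval : ∀ z : ℂ, p.eval z = ∑ t ∈ range (nm+np+1), a ((t:ℤ)-nm) * z^t :=
    fun z => eval_sum_C_mul_X_pow (nm+np+1) (fun t => a ((t:ℤ) - nm)) z
  have hcirc : ∀ z : ℂ, ‖z‖ = 1 → p.eval z ≠ 0 := by
    intro z hz
    rw [hp_eval]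
    exact hcirc0 z hz
  have hp_ne : p ≠ 0 := fun h => hcirc 1 (by simp) (by rw [h, eval_zero])
  have hp_coeff : ∀ t : ℕ, p.coeff t = if t < nm+np+1 then a ((t:ℤ) - nm) else 0 := by
    intro t
    rw [hpdef, finset_sum_coeff]
    by_cases htt : t < nm+np+1
    · rw [if_pos htt, Finset.sum_eq_single_of_mem t (mem_range.2 htt)]
      · rw [coeff_C_mul, coeff_X_pow, if_pos rfl, mul_one]
      · intro b _ hbne
        rw [coeff_C_mul, coeff_X_pow, if_neg (fun h => hbne h.symm), mul_zero]
    · rw [if_neg htt]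
      apply Finset.sum_eq_zero
      intro b hb
      rw [mem_range] at hb
      rw [coeff_C_mul, coeff_X_pow, if_neg (by omega), mul_zero]
  have hp_deg : p.natDegree ≤ nm + np := by
    rw [natDegree_le_iff_coeff_eq_zero]
    intro N hN
    rw [hp_coeff, if_neg (by omega)]
  set rts := p.roots with hrts
  set ins := rts.filter (fun ρ => ‖ρ‖ < 1) with hins
  set outs := rts.filter (fun ρ => ¬ ‖ρ‖ < 1) with houtsdef
  have hsplitm : ins + outs = rts := Multiset.filter_add_not _ _
  set m := Multiset.card ins with hm
  have hroot_norm : ∀ ρ ∈ rts, ‖ρ‖ ≠ 1 := by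
    intro ρ hρ h1
    exact hcirc ρ h1 (isRoot_of_mem_roots hρ)
  have houtsgt : ∀ ρ ∈ outs, 1 < ‖ρ‖ := by
    intro ρ hρ
    rw [houtsdef, Multiset.mem_filter] at hρ
    exact lt_of_le_of_ne (not_lt.1 hρ.2) (Ne.symm (hroot_norm ρ hρ.1))
  have hinslt : ∀ ρ ∈ ins, ‖ρ‖ < 1 := fun ρ hρ => (Multiset.mem_filter.1 hρ).2
  have hc : p.leadingCoeff ≠ 0 := leadingCoeff_ne_zero.2 hp_ne
  set A := (ins.map (fun ρ => X - C ρ)).prod with hA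
  set Qout := (outs.map (fun ρ => X - C ρ)).prod with hQ
  set U := C p.leadingCoeff * Qout with hU
  set B := (ins.map (fun ρ => (1:ℂ[X]) - C ρ * X)).prod with hB
  have hfac := (C_leadingCoeff_mul_prod_multiset_X_sub_C (IsAlgClosed.card_roots_eq_natDegree (p := p))).symm
  have hpUA : p = U * A := by
    rw [hU, hA, hQ]
    conv_lhs => rw [hfac]
    rw [← hrts, ← hsplitm, Multiset.map_add, Multiset.prod_add]
    ring
  have hAmonic : A.Monic := monic_multiset_prod_of_monic _ _ (fun ρ _ => monic_X_sub_C ρ)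
  have hA_ne : A ≠ 0 := hAmonic.ne_zero
  have hU_ne : U ≠ 0 := fun h => hp_ne (by rw [hpUA, h, zero_mul])
  have hAdeg : A.natDegree = m := by rw [hA, natDeg_prodXsubC ins, ← hm]
  have hdegsum : p.natDegree = U.natDegree + m := by
    rw [hpUA, natDegree_mul hU_ne hA_ne, hAdeg]
  have hUdeg : U.natDegree + m ≤ nm + np := by rw [← hdegsum]; exact hp_deg
  have hBcoeff : ∀ j : ℕ, B.coeff j = if j ≤ m then A.coeff (m - j) else 0 := by
    intro j
    rw [hB, reverse_coeff ins j, ← hm, ← hA]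
  have hUdisk : ∀ z : ℂ, ‖z‖ ≤ 1 → U.eval z ≠ 0 := by
    intro z hz
    rw [hU, eval_mul, eval_C]
    exact mul_ne_zero hc (prodXsubC_nonvanishing outs houtsgt z hz)
  have hBdisk : ∀ z : ℂ, ‖z‖ ≤ 1 → B.eval z ≠ 0 := fun z hz =>
    revprod_nonvanishing ins hinslt z hz
  have hBdeg : B.natDegree ≤ m := natDeg_revprod_le ins
  have hclaim := coeff_claim nm np a hsupp p U A B m hp_coeff hpUA hUdeg hAdeg hBcoeff
  rcases lt_trichotomy m nm with hmlt | hmeq | hmgt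
  · -- m < nm : contradiction via Rop^s not surjective
    exfalso
    set s := nm - m with hs
    set l' : ℕ → ℂ := fun j => if j < s then 0 else B.coeff (j - s) with hl'
    have hid : ∀ k : ℤ, a k = ∑ i ∈ range (U.natDegree + 1), ∑ j ∈ range (s + (m+1)),
        if (i:ℤ) - (j:ℤ) = k then U.coeff i * l' j else 0 := by
      intro k
      rw [hclaim k]
      apply Finset.sum_congr rfl
      intro i _
      rw [sum_range_shift _ s _ (fun j hj => by
        rw [show l' j = 0 from if_pos hj, mul_zero, ite_self])]
      apply Finset.sum_congr rfl
      intro j _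
      have h1 : l' (s + j) = B.coeff j := by
        rw [hl']
        simp only []
        rw [if_neg (by omega)]
        congr 1
        omega
      rw [h1]
      apply if_congr _ rfl rfl
      push_cast
      constructor <;> intro <;> omega
    have hop := toeplitz_factor a (U.natDegree + 1) (s + (m+1)) (fun i => U.coeff i) l'
      hid Ta hTa
    have hfirst : (∑ i ∈ range (U.natDegree + 1), U.coeff i • Lop ^ i) = aeval Lop U :=
      (aeval_eq_sum_range Lop).symm
    have hsecond : (∑ j ∈ range (s + (m+1)), l' j • Rop ^ j)
        = Rop ^ s * aeval Rop B := by
      rw [sum_range_shift _ s _ (fun j hj => by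
        rw [show l' j = 0 from if_pos hj, zero_smul])]
      rw [aeval_eq_sum_range' (show B.natDegree < m + 1 by omega) Rop, Finset.mul_sum]
      apply Finset.sum_congr rfl
      intro j _
      have h1 : l' (s + j) = B.coeff j := by
        rw [hl']
        simp only []
        rw [if_neg (by omega)]
        congr 1
        omega
      rw [h1, pow_add, mul_smul_comm]
    rw [hfirst, hsecond] at hop
    obtain ⟨w, hw⟩ := isUnit_aeval_of_no_root_in_disk Lop Lop_norm U hUdisk
    obtain ⟨vb, hvb⟩ := isUnit_aeval_of_no_root_in_disk Rop Rop_norm B hBdisk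
    have hRs : IsUnit (Rop ^ s) := by
      have h2 : (↑w⁻¹ : H →L[ℂ] H) * Ta * (↑vb⁻¹ : H →L[ℂ] H) = Rop ^ s := by
        rw [hop, ← hw, ← hvb, Units.inv_mul_cancel_left, Units.mul_inv_cancel_right]
      rw [← h2]
      exact ((w⁻¹.isUnit.mul hunit).mul vb⁻¹.isUnit)
    obtain ⟨y, hy⟩ := isUnit_surjective' hRs (lp.single 2 0 (1:ℂ))
    have h0 : ((Rop ^ s) y) 0 = 1 := by
      rw [hy]
      exact lp.single_apply_self _ _ _
    rw [Rop_pow_apply, if_neg (by omega)] at h0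
    exact zero_ne_one h0
  · -- m = nm : produce the factorization
    refine ⟨fun i => U.coeff i, fun j => B.coeff j, ?_, ?_, ?_⟩
    · intro z hz
      rw [← eval_eq_sum_range' (show U.natDegree < np + 1 by omega) z]
      exact hUdisk z hz
    · intro z hz
      rw [← eval_eq_sum_range' (show B.natDegree < nm + 1 by omega) z]
      exact hBdisk z hz
    · intro k
      rw [hclaim k]
      have hstep : ∀ i : ℕ, (∑ j ∈ range (m+1),
            if (i:ℤ) - (j:ℤ) = k + nm - m then U.coeff i * B.coeff j else 0)
          = ∑ j ∈ range (nm+1), if (i:ℤ) - (j:ℤ) = k then U.coeff i * B.coeff j else 0 := by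
        intro i
        rw [hmeq]
        apply Finset.sum_congr rfl
        intro j _
        exact if_congr (by constructor <;> intro <;> omega) rfl rfl
      rw [Finset.sum_congr rfl (fun i _ => hstep i)]
      apply Finset.sum_subset (Finset.range_subset_range.2 (by omega))
      intro i _ hi
      rw [mem_range, not_lt] at hi
      apply Finset.sum_eq_zero
      intro j _
      rw [coeff_eq_zero_of_natDegree_lt (show U.natDegree < i by omega), zero_mul, ite_self]
  · -- m > nm : contradiction via Lop^s not injective
    exfalso
    set s := m - nm with hs
    set u' : ℕ → ℂ := fun i => if i < s then 0 else U.coeff (i - s) with hu'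
    have hid : ∀ k : ℤ, a k = ∑ i ∈ range (s + (U.natDegree + 1)), ∑ j ∈ range (m+1),
        if (i:ℤ) - (j:ℤ) = k then u' i * B.coeff j else 0 := by
      intro k
      rw [hclaim k]
      rw [sum_range_shift _ s _ (fun i hi => by
        apply Finset.sum_eq_zero
        intro j _
        rw [show u' i = 0 from if_pos hi, zero_mul, ite_self])]
      apply Finset.sum_congr rfl
      intro i _
      have h1 : u' (s + i) = U.coeff i := by
        rw [hu']
        simp only []
        rw [if_neg (by omega)]
        congr 1
        omega
      apply Finset.sum_congr rfl
      intro j _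
      rw [h1]
      apply if_congr _ rfl rfl
      push_cast
      constructor <;> intro <;> omega
    have hop := toeplitz_factor a (s + (U.natDegree + 1)) (m+1) u' (fun j => B.coeff j)
      hid Ta hTa
    have hfirst : (∑ i ∈ range (s + (U.natDegree + 1)), u' i • Lop ^ i)
        = Lop ^ s * aeval Lop U := by
      rw [sum_range_shift _ s _ (fun i hi => by
        rw [show u' i = 0 from if_pos hi, zero_smul])]
      rw [aeval_eq_sum_range Lop, Finset.mul_sum]
      apply Finset.sum_congr rfl
      intro i _
      have h1 : u' (s + i) = U.coeff i := by
        rw [hu']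
        simp only []
        rw [if_neg (by omega)]
        congr 1
        omega
      rw [h1, pow_add, mul_smul_comm]
    have hsecond : (∑ j ∈ range (m+1), B.coeff j • Rop ^ j) = aeval Rop B :=
      (aeval_eq_sum_range' (show B.natDegree < m + 1 by omega) Rop).symm
    rw [hfirst, hsecond] at hop
    have hWu : IsUnit (aeval Lop U) := isUnit_aeval_of_no_root_in_disk Lop Lop_norm U hUdisk
    have hVu : IsUnit (aeval Rop B) := isUnit_aeval_of_no_root_in_disk Rop Rop_norm B hBdisk
    obtain ⟨w, hw⟩ := hWu.mul hVu
    have hLs : IsUnit (Lop ^ s) := by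
      have h2 : Ta * (↑w⁻¹ : H →L[ℂ] H) = Lop ^ s := by
        rw [hop, mul_assoc (Lop ^ s), ← hw, Units.mul_inv_cancel_right]
      rw [← h2]
      exact hunit.mul w⁻¹.isUnit
    have hL0 : (Lop ^ s) (lp.single 2 0 (1:ℂ)) = 0 := by
      apply lp.ext
      funext kk
      rw [show ((Lop ^ s) (lp.single 2 0 (1:ℂ)) : ∀ _ : ℕ, ℂ) kk
        = (lp.single 2 0 (1:ℂ) : H) (kk + s) from Lop_pow_apply s _ kk]
      rw [lp.single_apply_ne _ _ _ (by omega : kk + s ≠ 0)]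
      exact (congrFun (lp.coeFn_zero (fun _ : ℕ => ℂ) 2) kk).symm
    exact e0_ne_zero (isUnit_injective' hLs (by rw [hL0, map_zero]))

end

/-- Let `a(z) = ∑_{j=-n₋}^{n₊} a_j z^j` be a Laurent polynomial. The
Toeplitz operator `T(a)` is invertible as a bounded operator on `ℓ²` if and only if `a`
admits a Wiener–Hopf factorization `a(z) = u(z) l(1/z)`, with `u(z) = ∑_{i=0}^{n₊} u_i z^i`
and `l(z) = ∑_{i=0}^{n₋} l_i z^i` polynomials nonvanishing on the closed unit disk;
the factorization reads `a_k = ∑_{i-j=k} u_i l_j` on the level of coefficients. -/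
theorem toeplitz_invertible_iff_wiener_hopf
    (nm np : ℕ) (a : ℤ → ℂ)
    (hsupp : ∀ k : ℤ, (k < -(nm : ℤ) ∨ (np : ℤ) < k) → a k = 0)
    (Ta : lp (fun _ : ℕ => ℂ) 2 →L[ℂ] lp (fun _ : ℕ => ℂ) 2)
    (hTa : IsToeplitzOp Ta a) :
    IsUnit Ta ↔
      ∃ u l : ℕ → ℂ,
        (∀ z : ℂ, ‖z‖ ≤ 1 → ∑ i ∈ Finset.range (np + 1), u i * z ^ i ≠ 0) ∧
        (∀ z : ℂ, ‖z‖ ≤ 1 → ∑ i ∈ Finset.range (nm + 1), l i * z ^ i ≠ 0) ∧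
        (∀ k : ℤ, a k =
          ∑ i ∈ Finset.range (np + 1), ∑ j ∈ Finset.range (nm + 1),
            if (i : ℤ) - (j : ℤ) = k then u i * l j else 0) := by
  have hTa' : IsToeplitzOp' Ta a := hTa
  constructor
  · intro hunit
    exact forward_dir nm np a hsupp Ta hTa' hunit
  · rintro ⟨u, l, hu, hl, hk⟩
    exact backward_dir nm np a Ta hTa' u l hu hl hk
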